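/- arXiv:1603.09261 — 2 statements merged into one kernel-verified Lean document; each statement's English description precedes it below -/
import Mathlib

section
/- Let K be a field of characteristic different from 2, let n ≥ 3, and let a₁, …, a_n ∈ K×. Let f = a₁ + a₂x₂² + ⋯ + a_n x_n² ∈ K[x₂, …, x_n] and assume that the ideal (f) is prime (this holds automatically since the diagonal quadratic form ⟨a₁, …, a_n⟩ is nondegenerate of rank ≥ 3). Let L be the fraction field of K[x₂, …, x_n]/(f), the function field of the projective quadric {a₁x₁² + ⋯ + a_n x_n² = 0}. Then the natural map K×/K×² → L×/L×² is injective: every u ∈ K× that becomes a square in L is already a square in K. -/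
open Polynomial in
lemma one_var_not_sq {F : Type*} [Field F] (h2 : (2:F) ≠ 0) {e0 e2 : F}
    (h0 : e0 ≠ 0) (he2 : e2 ≠ 0) (s : F[X]) :
    s ^ 2 ≠ C e0 + C e2 * X ^ 2 := by
  intro heq
  have hs0 : s ≠ 0 := by
    intro h; rw [h] at heq
    have := congrArg (fun p => Polynomial.coeff p 0) heq
    simp [coeff_X_pow] at this
    exact h0 this.symm
  have hdeg : (C e0 + C e2 * X ^ 2).natDegree = 2 := by
    compute_degree!
  have hs1 : s.natDegree = 1 := by
    have := congrArg Polynomial.natDegree heq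
    rw [natDegree_pow, hdeg] at this
    omega
  set b := s.coeff 0 with hb
  set c := s.coeff 1 with hc
  have hsform : s = C c * X + C b :=
    eq_X_add_C_of_natDegree_le_one (by omega)
  have expand : s ^ 2 = C (c*c) * X ^ 2 + C (c*b+c*b) * X + C (b*b) := by
    rw [hsform]; simp only [map_mul, map_add]; ring
  rw [expand] at heq
  have c1 := congrArg (fun p => Polynomial.coeff p 1) heq
  have c0 := congrArg (fun p => Polynomial.coeff p 0) heq
  simp [coeff_X_pow, coeff_C, coeff_C_mul, mul_assoc] at c0 c1
  -- c1 : c*b+c*b = 0, c0 : b*b = e0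
  have hbne : b ≠ 0 := fun h => h0 (by rw [← c0, h, mul_zero])
  have hcne : c ≠ 0 := by
    intro h
    have := congrArg (fun p => Polynomial.coeff p 2) heq
    simp [coeff_X_pow, coeff_C, h] at this
    exact he2 this.symm
  apply h2
  have : (2:F) * (c*b) = 0 := by linear_combination c1
  rcases mul_eq_zero.mp this with h | h
  · exact h
  · exact absurd h (mul_ne_zero hcne hbne)

open Polynomial in
lemma quad_irred {D : Type*} [CommRing D] [IsDomain D] {A B : D} (hA : IsUnit A)
    (hnsq : ∀ z : D, z ^ 2 ≠ -(A*B)) :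
    Irreducible (C A * X ^ 2 + C B) := by
  have hAne : A ≠ 0 := hA.ne_zero
  set p : D[X] := C A * X ^ 2 + C B with hp
  have hcoeff2 : p.coeff 2 = A := by simp [hp, coeff_X_pow, coeff_C]
  have hpne : p ≠ 0 := fun h => hAne (by rw [← hcoeff2, h, coeff_zero])
  have hdeg : p.natDegree = 2 := by rw [hp]; compute_degree!
  constructor
  · intro hunit
    have := natDegree_eq_zero_of_isUnit hunit
    omega
  · intro g h hgh
    have hgne : g ≠ 0 := fun hg => hpne (by rw [hgh, hg, zero_mul])
    have hhne : h ≠ 0 := fun hg => hpne (by rw [hgh, hg, mul_zero])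
    have hsum : g.natDegree + h.natDegree = 2 := by
      rw [← natDegree_mul hgne hhne, ← hgh, hdeg]
    -- coefficient equations
    have hgle : g.natDegree ≤ 2 := by omega
    interval_cases hg : g.natDegree
    · -- g constant
      left
      obtain ⟨c, rfl⟩ := Polynomial.natDegree_eq_zero.mp hg
      rw [isUnit_C]
      have : c * h.coeff 2 = A := by
        have := congrArg (fun q => Polynomial.coeff q 2) hgh
        simpa [coeff_C_mul, hcoeff2] using this.symm
      exact isUnit_of_mul_isUnit_left (this ▸ hA)
    · -- both degree 1
      exfalso
      have hh1 : h.natDegree = 1 := by omega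
      have hgform : g = C (g.coeff 1) * X + C (g.coeff 0) :=
        eq_X_add_C_of_natDegree_le_one (by omega)
      have hhform : h = C (h.coeff 1) * X + C (h.coeff 0) :=
        eq_X_add_C_of_natDegree_le_one (by omega)
      set g1 := g.coeff 1; set g0 := g.coeff 0
      set h1 := h.coeff 1; set h0 := h.coeff 0
      have hexp : (C A * X^2 + C B : D[X])
          = C (g1*h1) * X^2 + C (g1*h0 + g0*h1) * X + C (g0*h0) := by
        rw [← hp, hgh, hgform, hhform]; simp only [map_mul, map_add]; ring
      have e2 := congrArg (fun q => Polynomial.coeff q 2) hexp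
      have e1 := congrArg (fun q => Polynomial.coeff q 1) hexp
      have e0 := congrArg (fun q => Polynomial.coeff q 0) hexp
      simp [coeff_X_pow, coeff_C, coeff_C_mul, mul_assoc] at e0 e1 e2
      exact hnsq (g1 * h0) (by linear_combination (-(g1*h0))*e1 + (g0*h0)*e2 + A*e0)
    · -- h constant
      right
      have hh0 : h.natDegree = 0 := by omega
      obtain ⟨c, rfl⟩ := Polynomial.natDegree_eq_zero.mp hh0
      rw [isUnit_C]
      have : g.coeff 2 * c = A := by
        have := congrArg (fun q => Polynomial.coeff q 2) hgh
        simpa [coeff_mul_C, hcoeff2] using this.symm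
      exact isUnit_of_mul_isUnit_right (this ▸ hA)

open MvPolynomial

lemma diag_not_sq {F : Type*} [Field F] (h2 : (2:F) ≠ 0) (m : ℕ)
    (e : Fin (m+2) → F) (he : ∀ i, e i ≠ 0) (z : MvPolynomial (Fin (m+1)) F) :
    z ^ 2 ≠ C (e 0) + ∑ j : Fin (m+1), C (e j.succ) * X j ^ 2 := by
  intro heq
  set ψ : MvPolynomial (Fin (m+1)) F →ₐ[F] Polynomial F :=
    aeval (fun j : Fin (m+1) => if j = 0 then Polynomial.X else 0) with hψ
  have := congrArg ψ heq
  rw [map_pow, map_add, map_sum] at this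
  have hC : ∀ c : F, ψ (C c) = Polynomial.C c := by
    intro c; simp [hψ, algebraMap_eq]
  have hsum : ∑ j : Fin (m+1), ψ (C (e j.succ) * X j ^ 2)
      = Polynomial.C (e (0:Fin (m+1)).succ) * Polynomial.X ^ 2 := by
    rw [Finset.sum_eq_single (0 : Fin (m+1))]
    · simp [hψ, algebraMap_eq]
    · intro j _ hj
      simp [hψ, algebraMap_eq, hj]
    · simp
  rw [hsum, hC] at this
  exact one_var_not_sq h2 (he 0) (he (Fin.succ 0)) (ψ z) this

lemma diag_irred (F : Type*) [Field F] (h2 : (2:F) ≠ 0) (m : ℕ)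
    (b : Fin (m+3) → F) (hb : ∀ i, b i ≠ 0) :
    Irreducible (C (b 0) + ∑ i : Fin (m+2), C (b i.succ) * X i ^ 2 :
      MvPolynomial (Fin (m+2)) F) := by
  rw [← MulEquiv.irreducible_iff (finSuccEquiv F (m+1)).toMulEquiv]
  set D := MvPolynomial (Fin (m+1)) F
  set A : D := C (b ((0:Fin (m+2)).succ)) with hA
  set B : D := C (b 0) + ∑ j : Fin (m+1), C (b (j.succ.succ)) * X j ^ 2 with hB
  have himg : (finSuccEquiv F (m+1)).toMulEquiv
      (C (b 0) + ∑ i : Fin (m+2), C (b i.succ) * X i ^ 2)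
      = Polynomial.C A * Polynomial.X ^ 2 + Polynomial.C B := by
    show (finSuccEquiv F (m+1)) _ = _
    rw [map_add, map_sum, Fin.sum_univ_succ]
    simp only [map_mul, map_pow, finSuccEquiv_X_zero, finSuccEquiv_X_succ]
    have hC : ∀ c : F, finSuccEquiv F (m+1) (C c) = Polynomial.C (C c) := by
      intro c; simp [finSuccEquiv_apply]
    rw [hC]
    simp only [hC, hA, hB]
    rw [map_add, map_sum]
    simp only [map_mul, map_pow]
    ring
  rw [himg]
  apply quad_irred
  · exact (isUnit_iff_ne_zero.mpr (hb _)).map MvPolynomial.C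
  · intro z hz
    set e : Fin (m+2) → F := Fin.cons (-(b ((0:Fin (m+2)).succ) * b 0))
      (fun j : Fin (m+1) => -(b ((0:Fin (m+2)).succ) * b (j.succ.succ))) with he
    have hene : ∀ i, e i ≠ 0 := by
      intro i
      refine Fin.cases ?_ ?_ i <;>
        simp [he, Fin.cons_zero, Fin.cons_succ, mul_ne_zero (hb _) (hb _)]
    apply diag_not_sq h2 m e hene z
    rw [hz, hA, hB]
    simp only [he, Fin.cons_zero, Fin.cons_succ, map_neg, map_mul]
    rw [mul_add, neg_add, Finset.mul_sum]
    congr 1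
    rw [← Finset.sum_neg_distrib]
    apply Finset.sum_congr rfl
    intro j _
    ring

-- helper: surjectivity of MvPolynomial.map onto polys with coefficients in range
lemma mv_map_range {σ : Type*} {R S : Type*} [CommSemiring R] [CommSemiring S]
    (g : R →+* S) (p : MvPolynomial σ S) (h : ∀ m, ∃ c, g c = coeff m p) :
    ∃ q : MvPolynomial σ R, map g q = p := by
  choose c hc using h
  refine ⟨∑ m ∈ p.support, monomial m (c m), ?_⟩
  rw [map_sum]
  simp_rw [map_monomial, hc]
  exact support_sum_monomial_coeff p

-- helper: elements of AdjoinRoot of a monic degree-2 polynomial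
lemma adjoinRoot_repr {K : Type*} [Field K] {g : Polynomial K} (hg : g.Monic)
    (hdeg : g.natDegree = 2) (x : AdjoinRoot g) :
    ∃ c0 c1 : K, x = algebraMap K _ c0 + algebraMap K _ c1 * AdjoinRoot.root g := by
  obtain ⟨p, rfl⟩ := AdjoinRoot.mk_surjective x
  have hrem : AdjoinRoot.mk g p = AdjoinRoot.mk g (p %ₘ g) := by
    conv_lhs => rw [← Polynomial.modByMonic_add_div p g]
    rw [map_add, map_mul, AdjoinRoot.mk_self, zero_mul, add_zero]
  have hg1 : g ≠ 1 := by intro h; rw [h] at hdeg; simp at hdeg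
  have hd : (p %ₘ g).natDegree ≤ 1 := by
    have := Polynomial.natDegree_modByMonic_lt p hg hg1
    omega
  have hform : p %ₘ g = Polynomial.C ((p %ₘ g).coeff 1) * Polynomial.X
      + Polynomial.C ((p %ₘ g).coeff 0) :=
    Polynomial.eq_X_add_C_of_natDegree_le_one hd
  refine ⟨(p %ₘ g).coeff 0, (p %ₘ g).coeff 1, ?_⟩
  rw [hrem, hform, map_add, map_mul, AdjoinRoot.mk_C, AdjoinRoot.mk_C, AdjoinRoot.mk_X,
    AdjoinRoot.algebraMap_eq, add_comm]
  simp

/-- Arason, degree 1, forms of rank ≥ 3: Let `K` be a field of characteristic ≠ 2,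
`n + 1 ≥ 3`, and `a₀, …, aₙ ∈ K×`. Let `f = a₀ + a₁x₁² + ⋯ + aₙxₙ²` in `n` variables, assume
`(f)` is prime, and let `L` be the fraction field of `K[x₁,…,xₙ]/(f)` (the function field of the
projective quadric `a₀X₀² + ⋯ + aₙXₙ² = 0`). Then `K×/K×² → L×/L×²` is injective: every
`u ∈ K×` that becomes a square in `L` is already a square in `K`. -/
theorem stmt_1 (K : Type) [Field K] (hchar : ringChar K ≠ 2)
    (n : ℕ) (hn : 2 ≤ n) (a : Fin (n + 1) → K) (ha : ∀ i, a i ≠ 0)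
    (f : MvPolynomial (Fin n) K)
    (hf : f = C (a 0) + ∑ i : Fin n, C (a i.succ) * X i ^ 2)
    (hprime : (Ideal.span {f}).IsPrime)
    (L : Type) [Field L]
    [Algebra (MvPolynomial (Fin n) K ⧸ Ideal.span {f}) L]
    [IsFractionRing (MvPolynomial (Fin n) K ⧸ Ideal.span {f}) L]
    [Algebra K L] [IsScalarTower K (MvPolynomial (Fin n) K ⧸ Ideal.span {f}) L]
    (u : K) (hu : u ≠ 0)
    (hsq : ∃ w : L, w ^ 2 = algebraMap K L u) :
    ∃ s : K, s ^ 2 = u := by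
  by_contra hns
  push_neg at hns
  have h2K : (2 : K) ≠ 0 := Ring.two_ne_zero hchar
  obtain ⟨m, rfl⟩ : ∃ m, n = m + 2 := ⟨n - 2, by omega⟩
  obtain ⟨w, hw⟩ := hsq
  obtain ⟨r, s, hsnz, hws⟩ := IsFractionRing.div_surjective (A := MvPolynomial (Fin (m+2)) K ⧸ Ideal.span {f}) w
  have hsL : algebraMap (MvPolynomial (Fin (m+2)) K ⧸ Ideal.span {f}) L s ≠ 0 :=
    IsFractionRing.to_map_ne_zero_of_mem_nonZeroDivisors hsnz
  have hs0 : s ≠ 0 := nonZeroDivisors.ne_zero hsnz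
  -- the equation in R
  have key : r ^ 2 = algebraMap K (MvPolynomial (Fin (m+2)) K ⧸ Ideal.span {f}) u * s ^ 2 := by
    apply IsFractionRing.injective (MvPolynomial (Fin (m+2)) K ⧸ Ideal.span {f}) L
    rw [map_pow, map_mul, map_pow, ← IsScalarTower.algebraMap_apply, ← hw, ← hws]
    field_simp
  -- lift to polynomials
  obtain ⟨P, hP⟩ := Ideal.Quotient.mk_surjective (I := Ideal.span {f}) r
  obtain ⟨Q, hQm⟩ := Ideal.Quotient.mk_surjective (I := Ideal.span {f}) s
  have hmkC : (Ideal.Quotient.mk (Ideal.span {f})) (C u) = algebraMap K (MvPolynomial (Fin (m+2)) K ⧸ Ideal.span {f}) u := by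
    rw [← MvPolynomial.algebraMap_eq, Ideal.Quotient.mk_algebraMap]
  have hmem : P ^ 2 - C u * Q ^ 2 ∈ Ideal.span {f} := by
    rw [← Ideal.Quotient.eq_zero_iff_mem, map_sub, map_pow, map_mul, map_pow,
      hP, hQm, hmkC, key, sub_self]
  obtain ⟨H, hH⟩ := Ideal.mem_span_singleton'.mp hmem
  have hQnot : Q ∉ Ideal.span {f} := by
    intro hmemQ
    exact hs0 (by rw [← hQm, Ideal.Quotient.eq_zero_iff_mem.mpr hmemQ])
  -- the quadratic extension K' = K(√u)
  have hirr : Irreducible (Polynomial.X ^ 2 - Polynomial.C u : Polynomial K) :=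
    X_pow_sub_C_irreducible_of_prime Nat.prime_two hns
  haveI : Fact (Irreducible (Polynomial.X ^ 2 - Polynomial.C u : Polynomial K)) := ⟨hirr⟩
  set g : Polynomial K := Polynomial.X ^ 2 - Polynomial.C u with hgdef
  set K' := AdjoinRoot g with hK'
  set ρ : K' := AdjoinRoot.root g with hρ
  have hρ2 : ρ ^ 2 = algebraMap K K' u := root_X_pow_sub_C_pow 2 u
  have hρne : ρ ≠ 0 := root_X_pow_sub_C_ne_zero' (by norm_num) hu
  have hinj : Function.Injective (algebraMap K K') := (algebraMap K K').injective
  have h2K' : (2 : K') ≠ 0 := by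
    intro h
    apply h2K
    apply hinj
    rw [map_ofNat, map_zero]
    exact_mod_cast h
  -- the conjugation σ
  have haev : (Polynomial.aeval (-ρ)) g = 0 := by
    show (Polynomial.aeval (-ρ)) (Polynomial.X ^ 2 - Polynomial.C u) = 0
    rw [map_sub, map_pow, Polynomial.aeval_X, Polynomial.aeval_C]
    rw [show (-ρ) ^ 2 = ρ ^ 2 by ring, hρ2, sub_self]
  set σ : K' →ₐ[K] K' := AdjoinRoot.liftAlgHom g (Algebra.ofId K K') (-ρ) haev with hσ
  have hσρ : σ ρ = -ρ := AdjoinRoot.liftAlgHom_root g (Algebra.ofId K K') (-ρ) haev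
  have hσalg : ∀ c : K, σ (algebraMap K K' c) = algebraMap K K' c := fun c =>
    σ.commutes c
  have hmono : (g : Polynomial K).Monic := by
    rw [hgdef]; exact Polynomial.monic_X_pow_sub_C u (by norm_num)
  have hgdeg : g.natDegree = 2 := by
    rw [hgdef]; exact Polynomial.natDegree_X_pow_sub_C
  have hfix : ∀ x : K', σ x = x → ∃ c : K, algebraMap K K' c = x := by
    intro x hx
    obtain ⟨c0, c1, rfl⟩ := adjoinRoot_repr hmono hgdeg x
    rw [map_add, map_mul, hσalg, hσalg, hσρ] at hx
    have : (2 : K') * (algebraMap K K' c1 * ρ) = 0 := by linear_combination - hx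
    rcases mul_eq_zero.mp this with h | h
    · exact absurd h h2K'
    · rcases mul_eq_zero.mp h with h' | h'
      · exact ⟨c0, by rw [h']; simp; rfl⟩
      · exact absurd h' hρne
  -- move everything to K'
  set φ : MvPolynomial (Fin (m+2)) K →+* MvPolynomial (Fin (m+2)) K' :=
    MvPolynomial.map (algebraMap K K') with hφ
  set Φ : MvPolynomial (Fin (m+2)) K' →+* MvPolynomial (Fin (m+2)) K' :=
    MvPolynomial.map (σ : K' →+* K') with hΦ
  have hΦφ : ∀ p, Φ (φ p) = φ p := by
    intro p
    have hcomp : ((σ : K' →+* K').comp (algebraMap K K')) = algebraMap K K' :=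
      RingHom.ext fun c => hσalg c
    rw [hφ, hΦ, MvPolynomial.map_map, hcomp]
  have hirr' : Irreducible (φ f) := by
    have himg : φ f = C ((algebraMap K K') (a 0))
        + ∑ i : Fin (m+2), C ((algebraMap K K') (a i.succ)) * X i ^ 2 := by
      rw [hf, map_add, map_sum, MvPolynomial.map_C]
      congr 1
      apply Finset.sum_congr rfl
      intro i _
      rw [map_mul, map_pow, MvPolynomial.map_C, MvPolynomial.map_X]
    rw [himg]
    exact diag_irred K' h2K' m (fun i => algebraMap K K' (a i))
      (fun i h => ha i (hinj (by rw [map_zero]; exact h)))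
  have hprime' : Prime (φ f) := UniqueFactorizationMonoid.irreducible_iff_prime.mp hirr'
  have hfacteq : (φ P - C ρ * φ Q) * (φ P + C ρ * φ Q) = φ f * φ H := by
    have h1 := congrArg φ hH
    rw [map_mul, map_sub, map_pow, map_mul, map_pow, MvPolynomial.map_C] at h1
    have h2 : (C ((algebraMap K K') u) : MvPolynomial (Fin (m+2)) K') = C ρ ^ 2 := by
      rw [← hρ2, map_pow]
    rw [h2] at h1
    linear_combination -h1
  have hdvd : φ f ∣ (φ P - C ρ * φ Q) * (φ P + C ρ * φ Q) := ⟨φ H, hfacteq⟩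
  have hΦC : Φ (C ρ) = - C ρ := by
    rw [hΦ, MvPolynomial.map_C, show (σ : K' →+* K') ρ = -ρ from hσρ, map_neg]
  have hΦm : Φ (φ P - C ρ * φ Q) = φ P + C ρ * φ Q := by
    rw [map_sub, map_mul, hΦφ, hΦφ, hΦC]; ring
  have hΦp : Φ (φ P + C ρ * φ Q) = φ P - C ρ * φ Q := by
    rw [map_add, map_mul, hΦφ, hΦφ, hΦC]; ring
  have hboth : φ f ∣ (φ P - C ρ * φ Q) ∧ φ f ∣ (φ P + C ρ * φ Q) := by
    rcases hprime'.2.2 _ _ hdvd with h | h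
    · refine ⟨h, ?_⟩
      have := map_dvd Φ h
      rwa [hΦφ, hΦm] at this
    · refine ⟨?_, h⟩
      have := map_dvd Φ h
      rwa [hΦφ, hΦp] at this
  have hdvd2 : φ f ∣ C (2*ρ) * φ Q := by
    have heq : C (2*ρ) * φ Q = (φ P + C ρ * φ Q) - (φ P - C ρ * φ Q) := by
      rw [map_mul, map_ofNat]
      ring
    rw [heq]
    exact dvd_sub hboth.2 hboth.1
  have h2ρ : (2*ρ : K') ≠ 0 := mul_ne_zero h2K' hρne
  have hdvdQ : φ f ∣ φ Q := by
    obtain ⟨M, hM⟩ := hdvd2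
    refine ⟨C ((2*ρ)⁻¹) * M, ?_⟩
    calc φ Q = C ((2*ρ)⁻¹) * (C (2*ρ) * φ Q) := by
          rw [← mul_assoc, ← map_mul, inv_mul_cancel₀ h2ρ, map_one, one_mul]
    _ = C ((2*ρ)⁻¹) * (φ f * M) := by rw [hM]
    _ = φ f * (C ((2*ρ)⁻¹) * M) := by ring
  obtain ⟨M, hM⟩ := hdvdQ
  have hMfix : Φ M = M := by
    have h1 : φ Q = φ f * Φ M := by
      have := congrArg Φ hM
      rwa [hΦφ, map_mul, hΦφ] at this
    have h0 : φ f * (Φ M - M) = 0 := by rw [mul_sub, ← hM, ← h1, sub_self]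
    rcases mul_eq_zero.mp h0 with h | h
    · exact absurd h hirr'.ne_zero
    · exact sub_eq_zero.mp h
  have hcoeffs : ∀ mm, ∃ c, algebraMap K K' c = coeff mm M := by
    intro mm
    apply hfix
    have := congrArg (coeff mm) hMfix
    rw [hΦ, MvPolynomial.coeff_map] at this
    exact this
  obtain ⟨M0, hM0⟩ := mv_map_range (algebraMap K K') M hcoeffs
  apply hQnot
  have hφQ : φ Q = φ (f * M0) := by rw [map_mul, hM0, hM]
  have hQf : Q = f * M0 := MvPolynomial.map_injective _ hinj hφQ
  exact Ideal.mem_span_singleton'.mpr ⟨M0, by rw [mul_comm, ← hQf]⟩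
end

section
/- Let K be a field of characteristic different from 2 and let a, b ∈ K×. Let L be the fraction field of K[u, v]/(1 − a u² − b v²) (the function field of the conic ⟨1, −a, −b⟩; assume the ideal is prime, which is automatic by nondegeneracy), and let M be the fraction field of K[u, v, w]/(1 − a u² − b v² + a b w²) (the function field of the quadric surface ⟨1, −a, −b, ab⟩; assume the ideal is prime). Then there is a K-algebra isomorphism between M and the rational function field L(t) in one variable over L. -/
open MvPolynomial

lemma unit_contra {K : Type} [Field K] {p : Polynomial K} (h : IsUnit p) {n : ℕ}
    (hn : p.coeff n ≠ 0) (hn0 : n ≠ 0) : False := by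
  obtain ⟨r, -, hr⟩ := Polynomial.isUnit_iff.mp h
  rw [← hr, Polynomial.coeff_C, if_neg hn0] at hn
  exact hn rfl

lemma not_dvd_1 (K : Type) [Field K] (a b : K) (hb : b ≠ 0) :
    ¬ (1 - C a * X 0 ^ 2 - C b * X 1 ^ 2 + C (a * b) * X 2 ^ 2 : MvPolynomial (Fin 3) K) ∣
      (X 1 - C a * X 0 * X 2) := by
  intro hdvd
  have h2 := map_dvd (eval₂Hom (Polynomial.C : K →+* Polynomial K) ![0, Polynomial.X, 0]) hdvd
  simp only [map_sub, map_add, map_mul, map_pow, map_one, eval₂Hom_C, eval₂Hom_X',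
    Matrix.cons_val_zero, Matrix.cons_val_one, Matrix.head_cons, Matrix.cons_val_two,
    Matrix.tail_cons] at h2
  have h2' : (1 - Polynomial.C b * Polynomial.X ^ 2) ∣ (Polynomial.X : Polynomial K) := by
    simpa using h2
  have h3 : (1 - Polynomial.C b * Polynomial.X ^ 2) ∣ (1 : Polynomial K) := by
    have h4 := dvd_add (dvd_refl (1 - Polynomial.C b * Polynomial.X ^ 2))
      (h2'.mul_left (Polynomial.C b * Polynomial.X))
    convert h4 using 1
    ring
  refine unit_contra (isUnit_of_dvd_one h3) (n := 2) ?_ two_ne_zero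
  simp [Polynomial.coeff_one, hb]

lemma not_dvd_2 (K : Type) [Field K] (a b : K) (ha : a ≠ 0) (hb : b ≠ 0) :
    ¬ (1 - C a * X 0 ^ 2 - C b * X 1 ^ 2 + C (a * b) * X 2 ^ 2 : MvPolynomial (Fin 3) K) ∣
      (1 - C a * X 0 ^ 2) := by
  intro hdvd
  have h2 := map_dvd (eval₂Hom (Polynomial.C : K →+* Polynomial K) ![Polynomial.X, 1, 0]) hdvd
  simp only [map_sub, map_add, map_mul, map_pow, map_one, eval₂Hom_C, eval₂Hom_X',
    Matrix.cons_val_zero, Matrix.cons_val_one, Matrix.head_cons, Matrix.cons_val_two,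
    Matrix.tail_cons] at h2
  have h2' : (1 - Polynomial.C a * Polynomial.X ^ 2 - Polynomial.C b) ∣
      (1 - Polynomial.C a * Polynomial.X ^ 2 : Polynomial K) := by simpa using h2
  have h3 : (1 - Polynomial.C a * Polynomial.X ^ 2 - Polynomial.C b) ∣ (Polynomial.C b) := by
    have h4 := dvd_sub h2' (dvd_refl (1 - Polynomial.C a * Polynomial.X ^ 2 - Polynomial.C b))
    convert h4 using 1
    ring
  have h5 : IsUnit (1 - Polynomial.C a * Polynomial.X ^ 2 - Polynomial.C b) :=
    isUnit_of_dvd_unit h3 (Polynomial.isUnit_C.mpr (isUnit_iff_ne_zero.mpr hb))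
  refine unit_contra h5 (n := 2) ?_ two_ne_zero
  simp [Polynomial.coeff_one, ha]

lemma not_dvd_3 (K : Type) [Field K] (a b : K) (hb : b ≠ 0) :
    ¬ (1 - C a * X 0 ^ 2 - C b * X 1 ^ 2 : MvPolynomial (Fin 2) K) ∣ X 1 := by
  intro hdvd
  have h2 := map_dvd (eval₂Hom (Polynomial.C : K →+* Polynomial K) ![0, Polynomial.X]) hdvd
  simp only [map_sub, map_add, map_mul, map_pow, map_one, eval₂Hom_C, eval₂Hom_X',
    Matrix.cons_val_zero, Matrix.cons_val_one, Matrix.head_cons] at h2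
  have h2' : (1 - Polynomial.C b * Polynomial.X ^ 2) ∣ (Polynomial.X : Polynomial K) := by
    simpa using h2
  have h3 : (1 - Polynomial.C b * Polynomial.X ^ 2) ∣ (1 : Polynomial K) := by
    have h4 := dvd_add (dvd_refl (1 - Polynomial.C b * Polynomial.X ^ 2))
      (h2'.mul_left (Polynomial.C b * Polynomial.X))
    convert h4 using 1
    ring
  refine unit_contra (isUnit_of_dvd_one h3) (n := 2) ?_ two_ne_zero
  simp [Polynomial.coeff_one, hb]

set_option maxHeartbeats 1000000 in
set_option synthInstance.maxHeartbeats 400000 in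
/-- quadric surface with square discriminant over the function field of the conic:
Let `K` be a field of characteristic ≠ 2 and `a, b ∈ K×`. Let `L` be the function field of the
conic `1 - a u² - b v² = 0` and `M` the function field of the quadric surface
`1 - a u² - b v² + a b w² = 0` (Pfister form `⟨1,-a,-b,ab⟩`, square discriminant). Then `M` is
`K`-isomorphic to the rational function field `L(t)` in one variable over `L`. -/
theorem stmt_4 (K : Type) [Field K] (hchar : ringChar K ≠ 2)
    (a b : K) (ha : a ≠ 0) (hb : b ≠ 0)
    (g₁ : MvPolynomial (Fin 2) K)
    (hg₁ : g₁ = 1 - C a * X 0 ^ 2 - C b * X 1 ^ 2)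
    (hprime₁ : (Ideal.span {g₁}).IsPrime)
    (g₂ : MvPolynomial (Fin 3) K)
    (hg₂ : g₂ = 1 - C a * X 0 ^ 2 - C b * X 1 ^ 2 + C (a * b) * X 2 ^ 2)
    (hprime₂ : (Ideal.span {g₂}).IsPrime)
    (L : Type) [Field L]
    [Algebra (MvPolynomial (Fin 2) K ⧸ Ideal.span {g₁}) L]
    [IsFractionRing (MvPolynomial (Fin 2) K ⧸ Ideal.span {g₁}) L]
    [Algebra K L] [IsScalarTower K (MvPolynomial (Fin 2) K ⧸ Ideal.span {g₁}) L]
    (M : Type) [Field M]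
    [Algebra (MvPolynomial (Fin 3) K ⧸ Ideal.span {g₂}) M]
    [IsFractionRing (MvPolynomial (Fin 3) K ⧸ Ideal.span {g₂}) M]
    [Algebra K M] [IsScalarTower K (MvPolynomial (Fin 3) K ⧸ Ideal.span {g₂}) M] :
    Nonempty (M ≃ₐ[K] RatFunc L) := by
  classical
  haveI := hprime₁
  haveI := hprime₂
  set φ2 : MvPolynomial (Fin 3) K →+* M :=
    (algebraMap (MvPolynomial (Fin 3) K ⧸ Ideal.span {g₂}) M).comp
      (Ideal.Quotient.mk (Ideal.span {g₂})) with hφ2def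
  set φ1 : MvPolynomial (Fin 2) K →+* L :=
    (algebraMap (MvPolynomial (Fin 2) K ⧸ Ideal.span {g₁}) L).comp
      (Ideal.Quotient.mk (Ideal.span {g₁})) with hφ1def
  have hφ2C : ∀ k : K, φ2 (C k) = algebraMap K M k := by
    intro k
    rw [hφ2def, RingHom.comp_apply, ← MvPolynomial.algebraMap_eq, Ideal.Quotient.mk_algebraMap,
      ← IsScalarTower.algebraMap_apply]
  have hφ1C : ∀ k : K, φ1 (C k) = algebraMap K L k := by
    intro k
    rw [hφ1def, RingHom.comp_apply, ← MvPolynomial.algebraMap_eq, Ideal.Quotient.mk_algebraMap,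
      ← IsScalarTower.algebraMap_apply]
  -- names
  set α : M := algebraMap K M a with hα
  set β : M := algebraMap K M b with hβ
  set U : M := φ2 (X 0) with hU
  set V : M := φ2 (X 1) with hV
  set W : M := φ2 (X 2) with hW
  set aL : L := algebraMap K L a with haL
  set bL : L := algebraMap K L b with hbL
  set uL : L := φ1 (X 0) with huL
  set vL : L := φ1 (X 1) with hvL
  have hβ0 : β ≠ 0 := by simp [hβ, hb]
  have hα0 : α ≠ 0 := by simp [hα, ha]
  have haL0 : aL ≠ 0 := by simp [haL, ha]
  have hbL0 : bL ≠ 0 := by simp [hbL, hb]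
  -- the quadric relation in M
  have hrel2 : 1 - α * U ^ 2 - β * V ^ 2 + α * β * W ^ 2 = 0 := by
    have h0 : φ2 g₂ = 0 := by
      rw [hφ2def, RingHom.comp_apply,
        Ideal.Quotient.eq_zero_iff_mem.mpr (Ideal.subset_span (Set.mem_singleton _)), map_zero]
    rw [hg₂] at h0
    simp only [map_add, map_sub, map_mul, map_pow, map_one, hφ2C] at h0
    rw [hα, hβ, hU, hV, hW]
    linear_combination h0
  -- the conic relation in L
  have hrel1 : 1 - aL * uL ^ 2 - bL * vL ^ 2 = 0 := by
    have h0 : φ1 g₁ = 0 := by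
      rw [hφ1def, RingHom.comp_apply,
        Ideal.Quotient.eq_zero_iff_mem.mpr (Ideal.subset_span (Set.mem_singleton _)), map_zero]
    rw [hg₁] at h0
    simp only [map_sub, map_mul, map_pow, map_one, hφ1C] at h0
    rw [haL, hbL, huL, hvL]
    linear_combination h0
  -- nonvanishing criteria
  have key2 : ∀ p : MvPolynomial (Fin 3) K, ¬ g₂ ∣ p → φ2 p ≠ 0 := by
    intro p hp h0
    have h1 : Ideal.Quotient.mk (Ideal.span {g₂}) p = 0 :=
      IsFractionRing.injective (MvPolynomial (Fin 3) K ⧸ Ideal.span {g₂}) M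
        (show _ = algebraMap _ M 0 by rw [map_zero]; exact h0)
    exact hp (Ideal.mem_span_singleton.mp (Ideal.Quotient.eq_zero_iff_mem.mp h1))
  have key1 : ∀ p : MvPolynomial (Fin 2) K, ¬ g₁ ∣ p → φ1 p ≠ 0 := by
    intro p hp h0
    have h1 : Ideal.Quotient.mk (Ideal.span {g₁}) p = 0 :=
      IsFractionRing.injective (MvPolynomial (Fin 2) K ⧸ Ideal.span {g₁}) L
        (show _ = algebraMap _ L 0 by rw [map_zero]; exact h0)
    exact hp (Ideal.mem_span_singleton.mp (Ideal.Quotient.eq_zero_iff_mem.mp h1))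
  -- specific nonvanishing facts
  have hdM : V - α * U * W ≠ 0 := by
    have h := key2 (X 1 - C a * X 0 * X 2) (by rw [hg₂]; exact not_dvd_1 K a b hb)
    intro h0
    apply h
    rw [map_sub, map_mul, map_mul, hφ2C]
    rw [hα, hU, hV, hW] at h0
    exact h0
  have h1aU : 1 - α * U ^ 2 ≠ 0 := by
    have h := key2 (1 - C a * X 0 ^ 2) (by rw [hg₂]; exact not_dvd_2 K a b ha hb)
    intro h0
    apply h
    rw [map_sub, map_mul, map_pow, map_one, hφ2C]
    rw [hα, hU] at h0
    exact h0
  have hvL0 : vL ≠ 0 := by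
    have h := key1 (X 1) (by rw [hg₁]; exact not_dvd_3 K a b hb)
    rw [hvL]; exact h
  have hVW : V ^ 2 - α * W ^ 2 ≠ 0 := by
    intro h0
    apply h1aU
    linear_combination hrel2 + β * h0
  -- the conic point over M
  set ubar : M := (U * V - W) / (V - α * U * W) with hubar
  set vbar : M := (V ^ 2 - α * W ^ 2) / (V - α * U * W) with hvbar
  have hvbar0 : vbar ≠ 0 := by
    rw [hvbar]
    exact div_ne_zero hVW hdM
  have hconicM : 1 - α * ubar ^ 2 - β * vbar ^ 2 = 0 := by
    rw [hubar, hvbar]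
    field_simp
    ring_nf
    linear_combination (V ^ 2 - α * W ^ 2) * hrel2
  -- the map on the conic coordinate ring with values in M
  set rA : MvPolynomial (Fin 2) K →+* M :=
    eval₂Hom (algebraMap K M) ![ubar, vbar] with hrAdef
  have hrAC : ∀ k : K, rA (C k) = algebraMap K M k := fun k => by
    rw [hrAdef]; simp
  have hrA0 : rA (X 0) = ubar := by rw [hrAdef]; simp
  have hrA1 : rA (X 1) = vbar := by rw [hrAdef]; simp
  have hrAg : rA g₁ = 0 := by
    rw [hg₁]
    simp only [map_sub, map_mul, map_pow, map_one, hrAC, hrA0, hrA1]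
    rw [← hα, ← hβ]
    exact hconicM
  obtain ⟨ρA, hρA⟩ : ∃ f : (MvPolynomial (Fin 2) K ⧸ Ideal.span {g₁}) →+* M,
      ∀ p, f (Ideal.Quotient.mk (Ideal.span {g₁}) p) = rA p := by
    refine ⟨Ideal.Quotient.lift _ rA ?_, fun p => Ideal.Quotient.lift_mk _ _ _⟩
    intro p hp
    obtain ⟨c, rfl⟩ := Ideal.mem_span_singleton.mp hp
    rw [map_mul, hrAg, zero_mul]
  -- extend to polynomials over the conic coordinate ring
  set ρB : Polynomial (MvPolynomial (Fin 2) K ⧸ Ideal.span {g₁}) →+* M :=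
    Polynomial.eval₂RingHom ρA U with hρBdef
  have hρBC : ∀ x, ρB (Polynomial.C x) = ρA x := fun x => by
    rw [hρBdef]; simp
  have hρBX : ρB Polynomial.X = U := by rw [hρBdef]; simp
  set s : Polynomial (MvPolynomial (Fin 2) K ⧸ Ideal.span {g₁}) :=
    Polynomial.C (Ideal.Quotient.mk (Ideal.span {g₁}) (X 1)) with hsdef
  have hρBs : ρB s = vbar := by rw [hsdef, hρBC, hρA, hrA1]
  -- localization away from s
  obtain ⟨ρL, hρL⟩ : ∃ f : Localization.Away s →+* M,
      ∀ y, f (algebraMap _ _ y) = ρB y := by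
    have hu : IsUnit (ρB s) := by rw [hρBs]; exact isUnit_iff_ne_zero.mpr hvbar0
    exact ⟨IsLocalization.Away.lift s hu, fun y => IsLocalization.Away.lift_eq s hu y⟩
  -- the map to RatFunc L
  set ι : Polynomial (MvPolynomial (Fin 2) K ⧸ Ideal.span {g₁}) →+* RatFunc L :=
    (algebraMap (Polynomial L) (RatFunc L)).comp
      (Polynomial.mapRingHom (algebraMap (MvPolynomial (Fin 2) K ⧸ Ideal.span {g₁}) L))
      with hιdef
  have hι_inj : Function.Injective ι := by
    rw [hιdef]
    refine (IsFractionRing.injective (Polynomial L) (RatFunc L)).comp ?_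
    exact Polynomial.map_injective _
      (IsFractionRing.injective (MvPolynomial (Fin 2) K ⧸ Ideal.span {g₁}) L)
  have hιs : ι s = algebraMap (Polynomial L) (RatFunc L) (Polynomial.C vL) := by
    rw [hιdef, hsdef]
    simp [hvL, hφ1def]
  have hιs0 : IsUnit (ι s) := by
    rw [hιs]
    refine isUnit_iff_ne_zero.mpr fun h0 => ?_
    have h0' : algebraMap (Polynomial L) (RatFunc L) (Polynomial.C vL) =
        algebraMap (Polynomial L) (RatFunc L) 0 := by rw [map_zero]; exact h0
    have := IsFractionRing.injective (Polynomial L) (RatFunc L) h0'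
    exact hvL0 (by simpa using this)
  obtain ⟨θ, hθ⟩ : ∃ f : Localization.Away s →+* RatFunc L,
      ∀ y, f (algebraMap _ _ y) = ι y :=
    ⟨IsLocalization.Away.lift s hιs0, fun y => IsLocalization.Away.lift_eq s hιs0 y⟩
  have hθ_inj : Function.Injective θ := by
    rw [injective_iff_map_eq_zero]
    intro x hx
    obtain ⟨⟨p, m⟩, hpm⟩ := IsLocalization.surj (M := Submonoid.powers s) x
    have h1 : θ x * ι m.1 = ι p := by rw [← hθ, ← hθ, ← map_mul, hpm]
    rw [hx, zero_mul] at h1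
    have h2 : (p : Polynomial _) = 0 := hι_inj (by rw [← h1, map_zero])
    rw [h2, map_zero] at hpm
    exact (IsLocalization.map_units (Localization.Away s) m).mul_left_eq_zero.mp hpm
  -- the map from the quadric polynomial ring into the localization
  set κ : K →+* Localization.Away s :=
    (@algebraMap (Polynomial (MvPolynomial (Fin 2) K ⧸ Ideal.span {g₁}))
      (Localization.Away s) _ _ OreLocalization.instAlgebra).comp
      (algebraMap K (Polynomial (MvPolynomial (Fin 2) K ⧸ Ideal.span {g₁}))) with hκdef
  set jB := @algebraMap (Polynomial (MvPolynomial (Fin 2) K ⧸ Ideal.span {g₁}))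
      (Localization.Away s) _ _ OreLocalization.instAlgebra with hjBdef
  set Tl : Localization.Away s := jB Polynomial.X with hTl
  set ul : Localization.Away s :=
    jB (Polynomial.C (Ideal.Quotient.mk (Ideal.span {g₁}) (X 0))) with hul
  set iv : Localization.Away s := IsLocalization.Away.invSelf s with hiv
  have hiv1 : jB s * iv = 1 := IsLocalization.Away.mul_invSelf s
  set Vl : Localization.Away s := (1 - κ a * ul * Tl) * κ b⁻¹ * iv with hVl
  set Wl : Localization.Away s := (Tl - ul) * κ b⁻¹ * iv with hWl
  set ΨL : MvPolynomial (Fin 3) K →+* Localization.Away s :=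
    eval₂Hom κ ![Tl, Vl, Wl] with hΨLdef
  have hΨLC : ∀ k : K, ΨL (C k) = κ k := fun k => by rw [hΨLdef]; simp
  have hΨL0 : ΨL (X 0) = Tl := by rw [hΨLdef]; simp
  have hΨL1 : ΨL (X 1) = Vl := by rw [hΨLdef]; simp
  have hΨL2 : ΨL (X 2) = Wl := by rw [hΨLdef]; simp
  -- values of ρL
  have hρκ : ∀ k : K, ρL (κ k) = algebraMap K M k := by
    intro k
    rw [hκdef, RingHom.comp_apply, hρL, Polynomial.algebraMap_apply, hρBC,
      ← Ideal.Quotient.mk_algebraMap, hρA, MvPolynomial.algebraMap_eq, hrAC]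
  have hρiv : ρL iv = vbar⁻¹ := by
    have h1 : vbar * ρL iv = 1 := by
      rw [← hρBs, ← hρL, ← map_mul, hiv1, map_one]
    exact eq_inv_of_mul_eq_one_right (by linear_combination h1)
  -- ρL ∘ ΨL agrees with φ2
  have hβinv : ρL (κ b⁻¹) = β⁻¹ := by rw [hρκ, map_inv₀, ← hβ]
  have hρTl : ρL Tl = U := by rw [hTl, hρL, hρBX]
  have hρul : ρL ul = ubar := by rw [hul, hρL, hρBC, hρA, hrA0]
  have hρVl : ρL Vl = V := by
    rw [hVl]
    simp only [map_mul, map_sub, map_one]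
    rw [hρκ, ← hα, hρTl, hρul, hβinv, hρiv]
    rw [hubar, hvbar]
    field_simp
    linear_combination V * hrel2
  have hρWl : ρL Wl = W := by
    rw [hWl]
    simp only [map_mul, map_sub]
    rw [hρTl, hρul, hβinv, hρiv]
    rw [hubar, hvbar]
    have hdM' : V - U * W * α ≠ 0 := by convert hdM using 1; ring
    have hVW' : V ^ 2 - W ^ 2 * α ≠ 0 := by convert hVW using 1; ring
    field_simp
    linear_combination W * hrel2
  have hcomp : ∀ p, ρL (ΨL p) = φ2 p := by
    have h : ρL.comp ΨL = φ2 := by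
      apply MvPolynomial.ringHom_ext
      · intro k
        rw [RingHom.comp_apply, hΨLC, hρκ, hφ2C]
      · intro i
        fin_cases i
        · show ρL (ΨL (X 0)) = φ2 (X 0)
          rw [hΨL0, hρTl, hU]
        · show ρL (ΨL (X 1)) = φ2 (X 1)
          rw [hΨL1, hρVl, hV]
        · show ρL (ΨL (X 2)) = φ2 (X 2)
          rw [hΨL2, hρWl, hW]
    intro p
    exact RingHom.congr_fun h p
  -- values of θ
  have hCR : ∀ l : L, algebraMap L (RatFunc L) l =
      algebraMap (Polynomial L) (RatFunc L) (Polynomial.C l) := by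
    intro l
    rw [RatFunc.algebraMap_apply]
    simp
  have hKR : ∀ k : K, algebraMap K (RatFunc L) k =
      algebraMap (Polynomial L) (RatFunc L) (Polynomial.C (algebraMap K L k)) := by
    intro k
    rw [IsScalarTower.algebraMap_apply K (Polynomial L) (RatFunc L), Polynomial.algebraMap_apply]
  set TR : RatFunc L := algebraMap (Polynomial L) (RatFunc L) Polynomial.X with hTR
  set uR : RatFunc L := algebraMap L (RatFunc L) uL with huR
  set vR : RatFunc L := algebraMap L (RatFunc L) vL with hvR
  set aR : RatFunc L := algebraMap K (RatFunc L) a with haR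
  set bR : RatFunc L := algebraMap K (RatFunc L) b with hbR
  have hbR0 : bR ≠ 0 := by simp [hbR, hb]
  have hvR0 : vR ≠ 0 := by
    rw [hvR]
    intro h0
    exact hvL0 ((algebraMap L (RatFunc L)).injective (by rw [map_zero]; exact h0))
  have hθT : θ Tl = TR := by
    rw [hTl, hθ, hιdef, RingHom.comp_apply]
    simp only [Polynomial.coe_mapRingHom, Polynomial.map_X]
    rfl
  have hθu : θ ul = uR := by
    rw [hul, hθ, hιdef, RingHom.comp_apply]
    simp only [Polynomial.coe_mapRingHom, Polynomial.map_C]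
    rw [huR, hCR, huL, hφ1def, RingHom.comp_apply]
  have hθκ : ∀ k : K, θ (κ k) = algebraMap K (RatFunc L) k := by
    intro k
    rw [hκdef, RingHom.comp_apply, hθ, hιdef, RingHom.comp_apply, Polynomial.algebraMap_apply]
    simp only [Polynomial.coe_mapRingHom, Polynomial.map_C]
    rw [← IsScalarTower.algebraMap_apply K _ L, hKR]
  have hθiv : θ iv = vR⁻¹ := by
    have h1 := congrArg θ hiv1
    rw [map_mul, map_one, hθ, hιs, ← hCR, ← hvR] at h1
    exact eq_inv_of_mul_eq_one_right h1
  have hθV : θ Vl = (1 - aR * uR * TR) * bR⁻¹ * vR⁻¹ := by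
    rw [hVl]
    simp only [map_mul, map_sub, map_one]
    rw [hθκ, hθκ, map_inv₀, hθu, hθT, hθiv, ← haR, ← hbR]
  have hθW : θ Wl = (TR - uR) * bR⁻¹ * vR⁻¹ := by
    rw [hWl]
    simp only [map_mul, map_sub]
    rw [hθκ, map_inv₀, hθu, hθT, hθiv, ← hbR]
  -- relation in RatFunc L
  have haRL : aR = algebraMap L (RatFunc L) aL := by rw [haR, hKR, ← haL, ← hCR]
  have hbRL : bR = algebraMap L (RatFunc L) bL := by rw [hbR, hKR, ← hbL, ← hCR]
  have hrel1R : 1 - aR * uR ^ 2 - bR * vR ^ 2 = 0 := by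
    have h1 := congrArg (algebraMap L (RatFunc L)) hrel1
    simp only [map_sub, map_mul, map_pow, map_one, map_zero] at h1
    rw [haRL, hbRL, huR, hvR]
    exact h1
  have h1aT : 1 - aR * TR ^ 2 ≠ 0 := by
    have h2 : (1 : Polynomial L) - Polynomial.C aL * Polynomial.X ^ 2 ≠ 0 := by
      intro h0
      have h3 := congrArg (fun p : Polynomial L => p.coeff 2) h0
      simp [Polynomial.coeff_one] at h3
      exact haL0 h3
    intro h0
    apply h2
    apply IsFractionRing.injective (Polynomial L) (RatFunc L)
    have h3 : algebraMap (Polynomial L) (RatFunc L) (1 - Polynomial.C aL * Polynomial.X ^ 2) =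
        1 - aR * TR ^ 2 := by
      rw [map_sub, map_one, map_mul, map_pow, ← hTR, haR, hKR, ← haL]
    rw [h3, h0, map_zero]
  have hbRi : bR * bR⁻¹ = 1 := mul_inv_cancel₀ hbR0
  have hvRi : vR * vR⁻¹ = 1 := mul_inv_cancel₀ hvR0
  -- the quadric relation is killed
  have hΨrg : θ (ΨL g₂) = 0 := by
    rw [hg₂]
    simp only [map_add, map_sub, map_mul, map_pow, map_one]
    rw [hΨLC, hΨLC, hΨL0, hΨL1, hΨL2, hθκ, hθκ, hθT, hθV, hθW, ← haR, ← hbR]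
    linear_combination (-(1-aR*TR^2)*(bR*bR⁻¹+1)*(vR*vR⁻¹)^2) * hbRi +
      (-(1-aR*TR^2)*(vR*vR⁻¹+1)) * hvRi +
      (-(bR*bR⁻¹^2*vR⁻¹^2*(1-aR*TR^2))) * hrel1R
  -- descend to the quotient
  obtain ⟨Ψ₀, hΨ₀⟩ : ∃ f : (MvPolynomial (Fin 3) K ⧸ Ideal.span {g₂}) →+* RatFunc L,
      ∀ p, f (Ideal.Quotient.mk (Ideal.span {g₂}) p) = θ (ΨL p) := by
    refine ⟨Ideal.Quotient.lift _ (θ.comp ΨL) ?_, fun p => Ideal.Quotient.lift_mk _ _ _⟩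
    intro p hp
    obtain ⟨c, rfl⟩ := Ideal.mem_span_singleton.mp hp
    rw [RingHom.comp_apply, map_mul, map_mul, hΨrg, zero_mul]
  have hΨ₀inj : Function.Injective Ψ₀ := by
    rw [injective_iff_map_eq_zero]
    intro x hx
    obtain ⟨p, rfl⟩ := Ideal.Quotient.mk_surjective x
    rw [hΨ₀] at hx
    have h1 : ΨL p = 0 := hθ_inj (by rw [hx, map_zero])
    have h2 : φ2 p = 0 := by rw [← hcomp, h1, map_zero]
    rw [hφ2def, RingHom.comp_apply] at h2
    exact IsFractionRing.injective (MvPolynomial (Fin 3) K ⧸ Ideal.span {g₂}) M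
      (show _ = algebraMap _ M 0 by rw [map_zero]; exact h2)
  -- lift to M
  obtain ⟨Ψf, hΨf⟩ : ∃ f : M →+* RatFunc L,
      ∀ x, f (algebraMap (MvPolynomial (Fin 3) K ⧸ Ideal.span {g₂}) M x) = Ψ₀ x :=
    ⟨IsFractionRing.lift hΨ₀inj, fun x => IsFractionRing.lift_algebraMap hΨ₀inj x⟩
  have hΨfφ2 : ∀ p, Ψf (φ2 p) = θ (ΨL p) := by
    intro p
    rw [hφ2def, RingHom.comp_apply, hΨf, hΨ₀]
  have hΨfK : ∀ k : K, Ψf (algebraMap K M k) = algebraMap K (RatFunc L) k := by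
    intro k
    have h1 : algebraMap K M k = φ2 (C k) := (hφ2C k).symm
    rw [h1, hΨfφ2, hΨLC, hθκ]
  -- surjectivity
  have hTmem : TR ∈ Ψf.fieldRange :=
    RingHom.mem_fieldRange.mpr ⟨U, by rw [hU, hΨfφ2, hΨL0, hθT]⟩
  have hVmem : (1 - aR * uR * TR) * bR⁻¹ * vR⁻¹ ∈ Ψf.fieldRange :=
    RingHom.mem_fieldRange.mpr ⟨V, by rw [hV, hΨfφ2, hΨL1, hθV]⟩
  have hWmem : (TR - uR) * bR⁻¹ * vR⁻¹ ∈ Ψf.fieldRange :=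
    RingHom.mem_fieldRange.mpr ⟨W, by rw [hW, hΨfφ2, hΨL2, hθW]⟩
  have hKmem : ∀ k : K, algebraMap K (RatFunc L) k ∈ Ψf.fieldRange := fun k =>
    RingHom.mem_fieldRange.mpr ⟨algebraMap K M k, hΨfK k⟩
  have hdenmem : (1 - aR * uR * TR) * bR⁻¹ * vR⁻¹ - aR * TR * ((TR - uR) * bR⁻¹ * vR⁻¹) ∈
      Ψf.fieldRange :=
    sub_mem hVmem (mul_mem (mul_mem (haR ▸ hKmem a) hTmem) hWmem)
  have hden : (1 - aR*uR*TR)*bR⁻¹*vR⁻¹ - aR * TR * ((TR - uR)*bR⁻¹*vR⁻¹) =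
      (1 - aR * TR^2) * bR⁻¹ * vR⁻¹ := by ring
  have hden0 : (1 - aR*uR*TR)*bR⁻¹*vR⁻¹ - aR * TR * ((TR - uR)*bR⁻¹*vR⁻¹) ≠ 0 := by
    rw [hden]
    simp [h1aT, hbR0, hvR0, sub_eq_zero]
  have humem : uR ∈ Ψf.fieldRange := by
    have heq : (TR * ((1 - aR*uR*TR)*bR⁻¹*vR⁻¹) - (TR - uR)*bR⁻¹*vR⁻¹) /
        ((1 - aR*uR*TR)*bR⁻¹*vR⁻¹ - aR * TR * ((TR - uR)*bR⁻¹*vR⁻¹)) = uR := by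
      rw [hden, div_eq_iff (by simp [h1aT, hbR0, hvR0, sub_eq_zero])]
      ring
    rw [← heq]
    exact div_mem (sub_mem (mul_mem hTmem hVmem) hWmem) hdenmem
  have hvmem : vR ∈ Ψf.fieldRange := by
    have heq : (((1 - aR*uR*TR)*bR⁻¹*vR⁻¹)^2 - aR * ((TR - uR)*bR⁻¹*vR⁻¹)^2) /
        ((1 - aR*uR*TR)*bR⁻¹*vR⁻¹ - aR * TR * ((TR - uR)*bR⁻¹*vR⁻¹)) = vR := by
      rw [hden, div_eq_iff (by simp [h1aT, hbR0, hvR0, sub_eq_zero])]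
      linear_combination ((1-aR*TR^2)*bR⁻¹^2*vR⁻¹^2) * hrel1R +
        ((1-aR*TR^2)*vR*bR⁻¹*vR⁻¹*(vR*vR⁻¹)) * hbRi +
        ((1-aR*TR^2)*vR*bR⁻¹*vR⁻¹) * hvRi
    rw [← heq]
    exact div_mem (sub_mem (pow_mem hVmem 2) (mul_mem (haR ▸ hKmem a) (pow_mem hWmem 2)))
      hdenmem
  have hA1mem : ∀ x : MvPolynomial (Fin 2) K ⧸ Ideal.span {g₁},
      algebraMap L (RatFunc L) (algebraMap _ L x) ∈ Ψf.fieldRange := by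
    intro x
    obtain ⟨p, rfl⟩ := Ideal.Quotient.mk_surjective x
    induction p using MvPolynomial.induction_on with
    | C k =>
      have : algebraMap L (RatFunc L)
          (algebraMap _ L (Ideal.Quotient.mk (Ideal.span {g₁}) (C k))) =
          algebraMap K (RatFunc L) k := by
        rw [show (C k : MvPolynomial (Fin 2) K) = algebraMap K _ k from rfl,
          Ideal.Quotient.mk_algebraMap, ← IsScalarTower.algebraMap_apply K _ L,
          hCR, hKR]
      rw [this]
      exact hKmem k
    | add p q hp hq =>
      rw [map_add, map_add, map_add]
      exact add_mem hp hq
    | mul_X p i hp =>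
      rw [map_mul, map_mul, map_mul]
      refine mul_mem hp ?_
      fin_cases i
      · show algebraMap L (RatFunc L)
            (algebraMap _ L (Ideal.Quotient.mk (Ideal.span {g₁}) (X 0))) ∈ Ψf.fieldRange
        have heq2 : algebraMap L (RatFunc L)
            (algebraMap _ L (Ideal.Quotient.mk (Ideal.span {g₁}) (X 0))) = uR := by
          rw [huR, huL, hφ1def, RingHom.comp_apply]
        rw [heq2]
        exact humem
      · show algebraMap L (RatFunc L)
            (algebraMap _ L (Ideal.Quotient.mk (Ideal.span {g₁}) (X 1))) ∈ Ψf.fieldRange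
        have heq2 : algebraMap L (RatFunc L)
            (algebraMap _ L (Ideal.Quotient.mk (Ideal.span {g₁}) (X 1))) = vR := by
          rw [hvR, hvL, hφ1def, RingHom.comp_apply]
        rw [heq2]
        exact hvmem
  have hLmem : ∀ l : L, algebraMap L (RatFunc L) l ∈ Ψf.fieldRange := by
    intro l
    obtain ⟨x, y, hy, hxy⟩ := IsFractionRing.div_surjective
      (A := MvPolynomial (Fin 2) K ⧸ Ideal.span {g₁}) l
    rw [← hxy, map_div₀]
    exact div_mem (hA1mem x) (hA1mem y)
  have hPmem : ∀ p : Polynomial L, algebraMap (Polynomial L) (RatFunc L) p ∈ Ψf.fieldRange := by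
    intro p
    induction p using Polynomial.induction_on' with
    | add p q hp hq =>
      rw [map_add]
      exact add_mem hp hq
    | monomial n l =>
      rw [← Polynomial.C_mul_X_pow_eq_monomial, map_mul, map_pow]
      exact mul_mem (by rw [← hCR]; exact hLmem l) (pow_mem hTmem n)
  have hsurj : Function.Surjective Ψf := by
    intro z
    obtain ⟨p, q, hq, hz⟩ := IsFractionRing.div_surjective (A := Polynomial L) z
    have hmem : z ∈ Ψf.fieldRange := by
      rw [← hz]
      exact div_mem (hPmem p) (hPmem q)
    exact RingHom.mem_fieldRange.mp hmem
  -- assemble the equivalence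
  exact ⟨AlgEquiv.ofRingEquiv (f := RingEquiv.ofBijective Ψf ⟨Ψf.injective, hsurj⟩)
    (fun k => hΨfK k)⟩
end
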